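/- arXiv:2005.01656 — 2 statements merged into one kernel-verified Lean document; each statement's English description precedes it below -/
import Mathlib

section
/- Let K ≥ 1, δ ∈ (0,1), p ≥ 1 a natural number, and set β(p,δ) = √( (2/p) (K·log 2 + log(1/δ)) ). Let μ^m, μ^n, μ̂^m, μ̂^n : Fin K → ℝ be vectors such that for all x ∈ ℝ^K, |⟨x, μ̂^m − μ^m⟩| ≤ ‖x‖₂ β(p,δ) and |⟨x, μ̂^n − μ^n⟩| ≤ ‖x‖₂ β(p,δ). Suppose there exist x₀, y₀ in the simplex Δ(K) with g := ⟨x₀, μ^m⟩ − ⟨y₀, μ^n⟩ > 0, and that p > 8 (K·log 2 + log(1/δ)) · ((‖x₀‖₂ + ‖y₀‖₂)/g)². Then there exist x, y ∈ Δ(K) such that ⟨x, μ̂^m⟩ − ‖x‖₂ β(p,δ) > ⟨y, μ̂^n⟩ + ‖y‖₂ β(p,δ), i.e., the statistical test of CatSE eliminating category n by category m under strong dominance succeeds at round p. -/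
open scoped BigOperators

/-- The simplex Δ(K) in ℝ^K. -/
def simplex (K : ℕ) : Set (EuclideanSpace ℝ (Fin K)) :=
  {x | (∀ k, 0 ≤ x k) ∧ ∑ k, x k = 1}

/-- If category `m` beats category `n` in the sense that `⟨x₀, μᵐ⟩ - ⟨y₀, μⁿ⟩ = g > 0` for some
`x₀, y₀` in the simplex, and the empirical means are within the confidence region of radius
`β(p, δ)`, then the CatSE elimination test (strong dominance) succeeds as soon as
`p > 8 (K log 2 + log(1/δ)) ((‖x₀‖ + ‖y₀‖)/g)²`. -/
theorem catSE_strong_dominance_test_succeeds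
    (K : ℕ) (hK : 1 ≤ K) (δ : ℝ) (hδ : δ ∈ Set.Ioo (0 : ℝ) 1) (p : ℕ) (hp : 1 ≤ p)
    (β : ℝ) (hβ : β = Real.sqrt ((2 / (p : ℝ)) * (K * Real.log 2 + Real.log (1 / δ))))
    (μm μn em en : EuclideanSpace ℝ (Fin K))
    (hm : ∀ x : EuclideanSpace ℝ (Fin K), |(inner ℝ x (em - μm) : ℝ)| ≤ ‖x‖ * β)
    (hn : ∀ x : EuclideanSpace ℝ (Fin K), |(inner ℝ x (en - μn) : ℝ)| ≤ ‖x‖ * β)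
    (x₀ y₀ : EuclideanSpace ℝ (Fin K)) (hx₀ : x₀ ∈ simplex K) (hy₀ : y₀ ∈ simplex K)
    (hg : (inner ℝ x₀ μm : ℝ) - (inner ℝ y₀ μn : ℝ) > 0)
    (hplarge : (p : ℝ) > 8 * (K * Real.log 2 + Real.log (1 / δ)) *
        ((‖x₀‖ + ‖y₀‖) / ((inner ℝ x₀ μm : ℝ) - (inner ℝ y₀ μn : ℝ))) ^ 2) :
    ∃ x ∈ simplex K, ∃ y ∈ simplex K,
      (inner ℝ x em : ℝ) - ‖x‖ * β > (inner ℝ y en : ℝ) + ‖y‖ * β := by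
  refine ⟨x₀, hx₀, y₀, hy₀, ?_⟩
  set g : ℝ := (inner ℝ x₀ μm : ℝ) - (inner ℝ y₀ μn : ℝ) with hgdef
  set L : ℝ := K * Real.log 2 + Real.log (1 / δ) with hL
  have hL0 : 0 < L := by
    have h1 : 0 < Real.log 2 := Real.log_pos (by norm_num)
    have h2 : 0 < Real.log (1 / δ) := by
      apply Real.log_pos
      rw [lt_div_iff₀ hδ.1]
      simpa using hδ.2
    have hK0 : (0 : ℝ) ≤ K := by positivity
    rw [hL]
    nlinarith [mul_nonneg hK0 h1.le]
  -- x₀ ≠ 0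
  have hx0ne : x₀ ≠ 0 := by
    intro h
    have := hx₀.2
    rw [h] at this
    simp at this
  have hy0ne : y₀ ≠ 0 := by
    intro h
    have := hy₀.2
    rw [h] at this
    simp at this
  have hxnorm : 0 < ‖x₀‖ := norm_pos_iff.mpr hx0ne
  have hynorm : 0 < ‖y₀‖ := norm_pos_iff.mpr hy0ne
  set s : ℝ := ‖x₀‖ + ‖y₀‖ with hs
  have hs0 : 0 < s := by positivity
  have hp0 : (0 : ℝ) < p := by exact_mod_cast hp
  -- β² = 2L/p < g²/(4s²), so 2 s β < g
  have hβ0 : 0 ≤ β := by rw [hβ]; exact Real.sqrt_nonneg _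
  have hβsq : β ^ 2 = 2 / p * L := by
    rw [hβ, Real.sq_sqrt]
    positivity
  have hgne : g ≠ 0 := ne_of_gt hg
  have hA : 8 * L * s ^ 2 < (p : ℝ) * g ^ 2 := by
    have hg2 : (0 : ℝ) < g ^ 2 := by positivity
    have h := mul_lt_mul_of_pos_right hplarge hg2
    have heq : 8 * L * (s / g) ^ 2 * g ^ 2 = 8 * L * s ^ 2 := by
      field_simp
    linarith [heq ▸ h]
  have h1 : β ^ 2 < (g / (2 * s)) ^ 2 := by
    rw [hβsq, div_pow]
    have heq : 2 / (p : ℝ) * L = 2 * L / p := by ring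
    rw [heq, div_lt_div_iff₀ hp0 (by positivity)]
    nlinarith [hA]
  have hβlt : β < g / (2 * s) := lt_of_pow_lt_pow_left₀ 2 (by positivity) h1
  have hkey : 2 * s * β < g := by
    have := mul_lt_mul_of_pos_left hβlt (show (0:ℝ) < 2 * s by positivity)
    have heq : 2 * s * (g / (2 * s)) = g := by field_simp
    linarith [heq ▸ this]
  -- use confidence bounds
  have h1 := (abs_le.mp (hm x₀)).1
  have h2 := (abs_le.mp (hn y₀)).1
  have e1 : (inner ℝ x₀ (em - μm) : ℝ) = (inner ℝ x₀ em : ℝ) - (inner ℝ x₀ μm : ℝ) := by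
    rw [inner_sub_right]
  have e2 : (inner ℝ y₀ (en - μn) : ℝ) = (inner ℝ y₀ en : ℝ) - (inner ℝ y₀ μn : ℝ) := by
    rw [inner_sub_right]
  rw [e1] at h1
  rw [e2] at h2
  have h2' := (abs_le.mp (hn y₀)).2
  rw [e2] at h2'
  have h1' := (abs_le.mp (hm x₀)).1
  rw [e1] at h1'
  -- inner x₀ em ≥ inner x₀ μm - ‖x₀‖β ; inner y₀ en ≤ inner y₀ μn + ‖y₀‖β
  nlinarith [h1', h2', hkey]
end

section
/- Let K ≥ 1, δ ∈ (0,1), p ≥ 1 a natural number, and set β(p,δ) = √( (2/p) (K·log 2 + log(1/δ)) ). Let μ^m, μ^n, μ̂^m, μ̂^n : Fin K → ℝ be vectors such that for all x ∈ ℝ^K, |⟨x, μ̂^m − μ^m⟩| ≤ ‖x‖₂ β(p,δ) and |⟨x, μ̂^n − μ^n⟩| ≤ ‖x‖₂ β(p,δ). Suppose μ^m_k ≥ μ^n_k for all k ∈ Fin K, μ^m ≠ μ^n, and p > 32 (K·log 2 + log(1/δ)) / ‖μ^m − μ^n‖₂². Then there exists x in the simplex Δ(K) with x ≠ 0 such that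 ⟨x, μ̂^m − μ̂^n⟩ > 2 ‖x‖₂ β(p,δ), i.e., the statistical test of CatSE eliminating category n by category m under first-order dominance succeeds at round p. -/
open scoped BigOperators

/-- If category `m` first-order dominates category `n` (`μᵐ ≥ μⁿ` coordinatewise, `μᵐ ≠ μⁿ`),
and the empirical means are within the confidence region of radius `β(p, δ)`, then the CatSE
elimination test (first-order dominance) succeeds as soon as
`p > 32 (K log 2 + log(1/δ)) / ‖μᵐ - μⁿ‖₂²`. -/
theorem catSE_first_order_dominance_test_succeeds
    (K : ℕ) (hK : 1 ≤ K) (δ : ℝ) (hδ : δ ∈ Set.Ioo (0 : ℝ) 1) (p : ℕ) (hp : 1 ≤ p)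
    (β : ℝ) (hβ : β = Real.sqrt ((2 / (p : ℝ)) * (K * Real.log 2 + Real.log (1 / δ))))
    (μm μn em en : EuclideanSpace ℝ (Fin K))
    (hm : ∀ x : EuclideanSpace ℝ (Fin K), |(inner ℝ x (em - μm) : ℝ)| ≤ ‖x‖ * β)
    (hn : ∀ x : EuclideanSpace ℝ (Fin K), |(inner ℝ x (en - μn) : ℝ)| ≤ ‖x‖ * β)
    (hdom : ∀ k, μm k ≥ μn k) (hne : μm ≠ μn)
    (hplarge : (p : ℝ) > 32 * (K * Real.log 2 + Real.log (1 / δ)) / ‖μm - μn‖ ^ 2) :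
    ∃ x ∈ simplex K, x ≠ 0 ∧ (inner ℝ x (em - en) : ℝ) > 2 * ‖x‖ * β := by
  obtain ⟨hδ0, hδ1⟩ := hδ
  have hlogδ : 0 < Real.log (1 / δ) := Real.log_pos ((one_lt_div hδ0).mpr hδ1)
  have hLpos : 0 < (K : ℝ) * Real.log 2 + Real.log (1 / δ) := by
    have h2 : (0:ℝ) ≤ (K : ℝ) * Real.log 2 := by positivity
    linarith
  have hppos : (0:ℝ) < p := by exact_mod_cast hp
  set d : EuclideanSpace ℝ (Fin K) := μm - μn with hd
  have hdne : d ≠ 0 := sub_ne_zero.mpr hne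
  have hdk : ∀ k, 0 ≤ d k := by
    intro k
    have : d k = μm k - μn k := by simp [hd]
    rw [this]; exact sub_nonneg.mpr (hdom k)
  set S : ℝ := ∑ k, d k with hS
  have hSnn : 0 ≤ S := Finset.sum_nonneg fun k _ => hdk k
  have hSpos : 0 < S := by
    rcases hSnn.lt_or_eq with h | h
    · exact h
    · exfalso; apply hdne
      have hz := (Finset.sum_eq_zero_iff_of_nonneg fun k _ => hdk k).mp h.symm
      ext k; exact hz k (Finset.mem_univ k)
  have hβnn : 0 ≤ β := hβ ▸ Real.sqrt_nonneg _
  have hβsq : β ^ 2 = 2 / (p:ℝ) * ((K : ℝ) * Real.log 2 + Real.log (1 / δ)) := by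
    rw [hβ, Real.sq_sqrt]; positivity
  have hdpos : 0 < ‖d‖ := norm_pos_iff.mpr hdne
  -- ‖d‖ > 4 β
  have hkey : 4 * β < ‖d‖ := by
    have h1 : 32 * ((K : ℝ) * Real.log 2 + Real.log (1 / δ)) / ‖d‖ ^ 2 < (p:ℝ) := hplarge
    have h2 : 32 * ((K : ℝ) * Real.log 2 + Real.log (1 / δ)) < (p:ℝ) * ‖d‖ ^ 2 := by
      rwa [div_lt_iff₀ (by positivity)] at h1
    have h3 : (4 * β) ^ 2 < ‖d‖ ^ 2 := by
      have e : (4 * β) ^ 2 * (p:ℝ)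
          = 32 * ((K : ℝ) * Real.log 2 + Real.log (1 / δ)) := by
        rw [mul_pow, hβsq]; field_simp; ring
      nlinarith [e, h2, hppos]
    exact lt_of_pow_lt_pow_left₀ 2 (norm_nonneg d) h3
  refine ⟨S⁻¹ • d, ⟨fun k => ?_, ?_⟩, ?_, ?_⟩
  · have : (S⁻¹ • d) k = S⁻¹ * d k := rfl
    rw [this]; exact mul_nonneg (inv_nonneg.mpr hSnn) (hdk k)
  · have h : ∀ k, (S⁻¹ • d) k = S⁻¹ * d k := fun k => rfl
    simp only [h, ← Finset.mul_sum, ← hS]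
    field_simp
  · exact smul_ne_zero (inv_ne_zero hSpos.ne') hdne
  · have e1 : (inner ℝ d (em - en) : ℝ) = (inner ℝ d em : ℝ) - (inner ℝ d en : ℝ) :=
      inner_sub_right _ _ _
    have e2 : (inner ℝ d (em - μm) : ℝ) = (inner ℝ d em : ℝ) - (inner ℝ d μm : ℝ) :=
      inner_sub_right _ _ _
    have e3 : (inner ℝ d (en - μn) : ℝ) = (inner ℝ d en : ℝ) - (inner ℝ d μn : ℝ) :=
      inner_sub_right _ _ _
    have e4 : ‖d‖ ^ 2 = (inner ℝ d μm : ℝ) - (inner ℝ d μn : ℝ) := by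
      rw [← real_inner_self_eq_norm_sq]
      nth_rewrite 2 [hd]
      exact inner_sub_right _ _ _
    have habs1 : -(‖d‖ * β) ≤ (inner ℝ d (em - μm) : ℝ) := neg_le_of_abs_le (hm d)
    have habs2 : (inner ℝ d (en - μn) : ℝ) ≤ ‖d‖ * β := le_of_abs_le (hn d)
    have hIJ : (inner ℝ d (em - en) : ℝ) ≥ ‖d‖ ^ 2 - 2 * (‖d‖ * β) := by
      rw [e1]; rw [e2] at habs1; rw [e3] at habs2; rw [e4]; linarith
    have hx_inner : (inner ℝ (S⁻¹ • d) (em - en) : ℝ) = S⁻¹ * (inner ℝ d (em - en) : ℝ) :=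
      real_inner_smul_left _ _ _
    have hx_norm : ‖S⁻¹ • d‖ = S⁻¹ * ‖d‖ := by
      rw [norm_smul, Real.norm_eq_abs, abs_of_pos (inv_pos.mpr hSpos)]
    rw [hx_inner, hx_norm]
    have hSinv : 0 < S⁻¹ := inv_pos.mpr hSpos
    have hstep : ‖d‖ ^ 2 - 2 * (‖d‖ * β) > 2 * ‖d‖ * β := by nlinarith
    have hmono : S⁻¹ * (‖d‖ ^ 2 - 2 * (‖d‖ * β)) ≤ S⁻¹ * (inner ℝ d (em - en) : ℝ) :=
      mul_le_mul_of_nonneg_left hIJ hSinv.le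
    have hmul : S⁻¹ * (2 * ‖d‖ * β) < S⁻¹ * (‖d‖ ^ 2 - 2 * (‖d‖ * β)) :=
      mul_lt_mul_of_pos_left hstep hSinv
    linarith [hmono, hmul]
end
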